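/- Let T ⊂ ℝ² be a closed triangle with vertices α₁, α₂, α₃, let p ∈ T, and let γ : [0,1] → T be a piecewise linear curve from α₁ to p whose tangent vector (wherever defined) lies in the closed convex cone spanned by the inward unit normals n₁₂ and n₃₁ to the sides α₁α₂ and α₃α₁. If the angle of T at α₁ is at most π/2, then the length of γ is bounded by |α₁ − p|(1 + 2·tan(π/2 − θ₁/2)), where θ₁ is the angle of T at α₁. -/

import Mathlib

open Set EuclideanGeometry

set_option maxHeartbeats 1000000 in
lemma stmt_9_key (x₁ y₁ x₂ y₂ a b e f R : ℝ)
    (h1 : a*x₁ + b*y₁ = 0) (h2 : a^2 + b^2 = 1)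
    (h3 : e*x₂ + f*y₂ = 0) (h4 : e^2 + f^2 = 1)
    (h5 : 0 < a*x₂ + b*y₂) (h6 : 0 < e*(x₁-x₂) + f*(y₁-y₂))
    (hx1 : 0 < x₁^2 + y₁^2) (hx2 : 0 < x₂^2 + y₂^2)
    (hRpos : 0 < R) (hR2 : R*R = (x₁^2+y₁^2)*(x₂^2+y₂^2)) :
    (a*e + b*f) * R = -(x₁*x₂ + y₁*y₂) := by
  have ha : a*(x₁^2+y₁^2) = -(y₁*(b*x₁ - a*y₁)) := by linear_combination x₁*h1
  have hb : b*(x₁^2+y₁^2) = x₁*(b*x₁ - a*y₁) := by linear_combination y₁*h1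
  have he : e*(x₂^2+y₂^2) = -(y₂*(f*x₂ - e*y₂)) := by linear_combination x₂*h3
  have hf : f*(x₂^2+y₂^2) = x₂*(f*x₂ - e*y₂) := by linear_combination y₂*h3
  have hu2 : (b*x₁ - a*y₁)^2 = x₁^2+y₁^2 := by
    linear_combination (x₁^2+y₁^2)*h2 - (a*x₁+b*y₁)*h1
  have hw2 : (f*x₂ - e*y₂)^2 = x₂^2+y₂^2 := by
    linear_combination (x₂^2+y₂^2)*h4 - (e*x₂+f*y₂)*h3
  have huD : 0 < (b*x₁-a*y₁)*(x₁*y₂-y₁*x₂) := by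
    have hid : (b*x₁-a*y₁)*(x₁*y₂-y₁*x₂) = (a*x₂+b*y₂)*(x₁^2+y₁^2) := by
      linear_combination (-x₂)*ha + (-y₂)*hb
    rw [hid]; exact mul_pos h5 hx1
  have hwD : (f*x₂-e*y₂)*(x₁*y₂-y₁*x₂) < 0 := by
    have hid : (f*x₂-e*y₂)*(x₁*y₂-y₁*x₂) = -((e*(x₁-x₂)+f*(y₁-y₂))*(x₂^2+y₂^2)) := by
      linear_combination (x₁-x₂)*he + (y₁-y₂)*hf
    rw [hid]
    simpa using mul_pos h6 hx2
  have huw : (b*x₁-a*y₁)*(f*x₂-e*y₂) < 0 := by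
    nlinarith [huD, hwD, sq_nonneg (x₁*y₂-y₁*x₂), mul_pos huD (neg_pos.2 hwD)]
  have huwe : (b*x₁-a*y₁)*(f*x₂-e*y₂) = -R := by
    have hsq : ((b*x₁-a*y₁)*(f*x₂-e*y₂))^2 = R*R := by
      rw [mul_pow, hu2, hw2, hR2]
    have hzero : ((b*x₁-a*y₁)*(f*x₂-e*y₂) - R) * ((b*x₁-a*y₁)*(f*x₂-e*y₂) + R) = 0 := by
      linear_combination hsq
    rcases mul_eq_zero.mp hzero with h | h
    · rw [sub_eq_zero] at h
      exact absurd h (by intro h'; rw [h'] at huw; exact absurd hRpos (by linarith))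
    · linarith
  have hkey : (a*e+b*f) * ((x₁^2+y₁^2)*(x₂^2+y₂^2)) =
      ((b*x₁-a*y₁)*(f*x₂-e*y₂))*(x₁*x₂+y₁*y₂) := by
    linear_combination (e*(x₂^2+y₂^2))*ha + (-(y₁*(b*x₁-a*y₁)))*he +
      (f*(x₂^2+y₂^2))*hb + (x₁*(b*x₁-a*y₁))*hf
  apply mul_right_cancel₀ (ne_of_gt hRpos)
  calc (a*e+b*f) * R * R = (a*e+b*f) * ((x₁^2+y₁^2)*(x₂^2+y₂^2)) := by rw [mul_assoc, hR2]
    _ = ((b*x₁-a*y₁)*(f*x₂-e*y₂))*(x₁*x₂+y₁*y₂) := hkey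
    _ = -(x₁*x₂+y₁*y₂) * R := by rw [huwe]; ring

set_option maxHeartbeats 1000000 in
open Fin.NatCast in
/-- Length bound for a piecewise linear curve from a vertex `α₁` of a triangle `T ⊆ ℂ ≅ ℝ²`
to a point `p ∈ T`, whose tangent vectors lie in the closed convex cone spanned by the
inward unit normals `n₁₂`, `n₃₁` to the sides `α₁α₂` and `α₃α₁`.  If the angle `θ₁` of `T`
at `α₁` is at most `π/2`, the length of the curve is bounded by
`|α₁ − p| (1 + 2 tan(π/2 − θ₁/2))`. -/
theorem stmt_9 (α₁ α₂ α₃ p : ℂ)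
    (hT : ¬ Collinear ℝ ({α₁, α₂, α₃} : Set ℂ))
    (hp : p ∈ convexHull ℝ ({α₁, α₂, α₃} : Set ℂ))
    (n₁₂ n₃₁ : ℂ)
    (hn12unit : ‖n₁₂‖ = 1) (hn12perp : (inner ℝ n₁₂ (α₂ - α₁) : ℝ) = 0)
    (hn12in : (0:ℝ) < inner ℝ n₁₂ (α₃ - α₁))
    (hn31unit : ‖n₃₁‖ = 1) (hn31perp : (inner ℝ n₃₁ (α₁ - α₃) : ℝ) = 0)
    (hn31in : (0:ℝ) < inner ℝ n₃₁ (α₂ - α₃))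
    (θ₁ : ℝ) (hθ₁ : θ₁ = InnerProductGeometry.angle (α₂ - α₁) (α₃ - α₁))
    (hacute : θ₁ ≤ Real.pi / 2)
    (n : ℕ) (v : Fin (n + 1) → ℂ) (hv0 : v 0 = α₁) (hvn : v (Fin.last n) = p)
    (hvT : ∀ i, v i ∈ convexHull ℝ ({α₁, α₂, α₃} : Set ℂ))
    -- each tangent vector lies in the closed convex cone spanned by `n₁₂` and `n₃₁`
    (hcone : ∀ i : Fin n, ∃ s t : ℝ, 0 ≤ s ∧ 0 ≤ t ∧
      v i.succ - v i.castSucc = s • n₁₂ + t • n₃₁) :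
    ∑ i : Fin n, ‖v i.succ - v i.castSucc‖ ≤
      ‖α₁ - p‖ * (1 + 2 * Real.tan (Real.pi / 2 - θ₁ / 2)) := by
  -- nondegeneracy of the sides
  have hz₁ne : α₂ - α₁ ≠ 0 := by
    intro h
    apply hT
    have hset : ({α₁, α₂, α₃} : Set ℂ) = {α₁, α₃} := by
      rw [show α₂ = α₁ from sub_eq_zero.mp h]; simp
    rw [hset]; exact collinear_pair ℝ _ _
  have hz₂ne : α₃ - α₁ ≠ 0 := by
    intro h
    apply hT
    have hset : ({α₁, α₂, α₃} : Set ℂ) = {α₁, α₂} := by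
      rw [show α₃ = α₁ from sub_eq_zero.mp h]; ext x; simp; tauto
    rw [hset]; exact collinear_pair ℝ _ _
  set z₁ : ℂ := α₂ - α₁ with hz₁def
  set z₂ : ℂ := α₃ - α₁ with hz₂def
  -- real coordinates
  have hinner_coord : ∀ z w : ℂ, (inner ℝ z w : ℝ) = z.re*w.re + z.im*w.im := by
    intro z w; rw [Complex.inner, Complex.mul_re, Complex.conj_re, Complex.conj_im]; ring
  have hnorm_coord : ∀ z : ℂ, ‖z‖ = Real.sqrt (z.re^2 + z.im^2) := by
    intro z; rw [Complex.norm_def, Complex.normSq_apply]; ring_nf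
  have hE1pos : 0 < z₁.re^2 + z₁.im^2 := by
    have := norm_pos_iff.mpr hz₁ne
    rw [hnorm_coord z₁] at this
    exact Real.sqrt_pos.mp this
  have hE2pos : 0 < z₂.re^2 + z₂.im^2 := by
    have := norm_pos_iff.mpr hz₂ne
    rw [hnorm_coord z₂] at this
    exact Real.sqrt_pos.mp this
  -- hypotheses in coordinates
  have h1 : n₁₂.re * z₁.re + n₁₂.im * z₁.im = 0 := by
    rw [← hinner_coord]; exact hn12perp
  have h2 : n₁₂.re^2 + n₁₂.im^2 = 1 := by
    have := hn12unit
    rw [hnorm_coord, Real.sqrt_eq_one] at this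
    exact this
  have h3 : n₃₁.re * z₂.re + n₃₁.im * z₂.im = 0 := by
    have h := hn31perp
    rw [show α₁ - α₃ = -z₂ by rw [hz₂def]; ring, hinner_coord] at h
    simp at h
    linarith
  have h4 : n₃₁.re^2 + n₃₁.im^2 = 1 := by
    have := hn31unit
    rw [hnorm_coord, Real.sqrt_eq_one] at this
    exact this
  have h5 : 0 < n₁₂.re * z₂.re + n₁₂.im * z₂.im := by
    rw [← hinner_coord]; exact hn12in
  have h6 : 0 < n₃₁.re * (z₁.re - z₂.re) + n₃₁.im * (z₁.im - z₂.im) := by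
    have h := hn31in
    rw [show α₂ - α₃ = z₁ - z₂ by rw [hz₁def, hz₂def]; ring, hinner_coord] at h
    simpa using h
  -- the product of norms
  have hR2 : (‖z₁‖ * ‖z₂‖) * (‖z₁‖ * ‖z₂‖) = (z₁.re^2 + z₁.im^2) * (z₂.re^2 + z₂.im^2) := by
    rw [hnorm_coord z₁, hnorm_coord z₂,
      show Real.sqrt (z₁.re^2+z₁.im^2) * Real.sqrt (z₂.re^2+z₂.im^2) *
        (Real.sqrt (z₁.re^2+z₁.im^2) * Real.sqrt (z₂.re^2+z₂.im^2)) =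
        (Real.sqrt (z₁.re^2+z₁.im^2) * Real.sqrt (z₁.re^2+z₁.im^2)) *
        (Real.sqrt (z₂.re^2+z₂.im^2) * Real.sqrt (z₂.re^2+z₂.im^2)) by ring,
      Real.mul_self_sqrt hE1pos.le, Real.mul_self_sqrt hE2pos.le]
  have hRpos : 0 < ‖z₁‖ * ‖z₂‖ :=
    mul_pos (norm_pos_iff.mpr hz₁ne) (norm_pos_iff.mpr hz₂ne)
  have hkey := stmt_9_key z₁.re z₁.im z₂.re z₂.im n₁₂.re n₁₂.im n₃₁.re n₃₁.im
    (‖z₁‖ * ‖z₂‖) h1 h2 h3 h4 h5 h6 hE1pos hE2pos hRpos hR2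
  -- the inner product of the normals is -cos θ₁
  have hcos : Real.cos θ₁ = (z₁.re*z₂.re + z₁.im*z₂.im) / (‖z₁‖ * ‖z₂‖) := by
    rw [hθ₁, InnerProductGeometry.cos_angle, hinner_coord z₁ z₂]
  have hcinner : (inner ℝ n₁₂ n₃₁ : ℝ) = -Real.cos θ₁ := by
    rw [hinner_coord, hcos]
    rw [eq_comm, neg_div', div_eq_iff (ne_of_gt hRpos), eq_comm]
    rw [show ‖z₁‖ * ‖z₂‖ = (‖z₁‖ * ‖z₂‖) from rfl]
    linear_combination hkey
  -- θ₁ is positive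
  have hθnn : 0 ≤ θ₁ := hθ₁ ▸ InnerProductGeometry.angle_nonneg _ _
  have hθpos : 0 < θ₁ := by
    rcases hθnn.lt_or_eq with h | h
    · exact h
    · exfalso
      have h0 : InnerProductGeometry.angle z₁ z₂ = 0 := by rw [← hθ₁, ← h]
      obtain ⟨-, r, hr, hz⟩ := InnerProductGeometry.angle_eq_zero_iff.mp h0
      rw [hz, real_inner_smul_right, hn12perp, mul_zero] at hn12in
      exact lt_irrefl 0 hn12in
  -- decompose the curve
  choose s t hs ht hst using hcone
  have htel : ∑ i : Fin n, (v i.succ - v i.castSucc) = p - α₁ := by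
    have h0 : ∀ i : Fin n, v i.succ - v i.castSucc =
        v ((((i : ℕ) + 1 : ℕ)) : Fin (n+1)) - v (((i : ℕ) : ℕ) : Fin (n+1)) := by
      intro i
      have e1 : ((((i : ℕ) + 1 : ℕ)) : Fin (n+1)) = i.succ := by
        apply Fin.ext; rw [Fin.val_cast_of_lt (by omega)]; simp
      have e2 : ((((i : ℕ)) : ℕ) : Fin (n+1)) = i.castSucc := by
        apply Fin.ext; rw [Fin.val_cast_of_lt (by omega)]; simp
      rw [e1, e2]
    calc ∑ i : Fin n, (v i.succ - v i.castSucc)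
        = ∑ i : Fin n, (v ((((i:ℕ)+1 : ℕ)) : Fin (n+1)) - v (((i:ℕ) : ℕ) : Fin (n+1))) :=
          Finset.sum_congr rfl (fun i _ => h0 i)
      _ = ∑ k ∈ Finset.range n, (v (((k+1 : ℕ)) : Fin (n+1)) - v ((k : ℕ) : Fin (n+1))) :=
          Fin.sum_univ_eq_sum_range (fun k => v (((k+1 : ℕ)) : Fin (n+1)) - v ((k : ℕ) : Fin (n+1))) n
      _ = v ((n : ℕ) : Fin (n+1)) - v ((0 : ℕ) : Fin (n+1)) :=
          Finset.sum_range_sub (fun k => v ((k : ℕ) : Fin (n+1))) n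
      _ = p - α₁ := by
          rw [show ((n : ℕ) : Fin (n+1)) = Fin.last n by simp, hvn,
            show ((0 : ℕ) : Fin (n+1)) = 0 by simp, hv0]
  have hpα : p - α₁ = (∑ i : Fin n, s i) • n₁₂ + (∑ i : Fin n, t i) • n₃₁ := by
    rw [← htel, Finset.sum_congr rfl (fun i _ => hst i), Finset.sum_add_distrib,
      Finset.sum_smul, Finset.sum_smul]
  set S : ℝ := ∑ i : Fin n, s i with hSdef
  set T : ℝ := ∑ i : Fin n, t i with hTdef
  have hS0 : 0 ≤ S := Finset.sum_nonneg (fun i _ => hs i)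
  have hT0 : 0 ≤ T := Finset.sum_nonneg (fun i _ => ht i)
  have hm2 : ‖α₁ - p‖^2 = S^2 + T^2 + 2*(S*T)*(inner ℝ n₁₂ n₃₁ : ℝ) := by
    rw [norm_sub_rev, hpα, norm_add_sq_real, real_inner_smul_left, real_inner_smul_right,
      norm_smul, norm_smul, hn12unit, hn31unit, Real.norm_eq_abs, Real.norm_eq_abs,
      abs_of_nonneg hS0, abs_of_nonneg hT0]
    ring
  have hlen : ∑ i : Fin n, ‖v i.succ - v i.castSucc‖ ≤ S + T := by
    rw [hSdef, hTdef, ← Finset.sum_add_distrib]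
    apply Finset.sum_le_sum
    intro i _
    rw [hst i]
    calc ‖s i • n₁₂ + t i • n₃₁‖ ≤ ‖s i • n₁₂‖ + ‖t i • n₃₁‖ := norm_add_le _ _
      _ = s i + t i := by
          rw [norm_smul, norm_smul, hn12unit, hn31unit, Real.norm_eq_abs, Real.norm_eq_abs,
            abs_of_nonneg (hs i), abs_of_nonneg (ht i)]
          ring
  -- trigonometry
  have hpi := Real.pi_pos
  have hsinpos : 0 < Real.sin (θ₁/2) :=
    Real.sin_pos_of_pos_of_lt_pi (by linarith) (by linarith)
  have hsin2 : Real.sin (θ₁/2)^2 = (1 - Real.cos θ₁)/2 := by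
    have h := Real.sin_sq_eq_half_sub (θ₁/2)
    rw [show 2*(θ₁/2) = θ₁ by ring] at h
    linarith
  have hcoshalf : Real.sqrt 2/2 ≤ Real.cos (θ₁/2) := by
    have h := Real.cos_le_cos_of_nonneg_of_le_pi (by linarith : 0 ≤ θ₁/2)
      (by linarith : Real.pi/4 ≤ Real.pi) (by linarith : θ₁/2 ≤ Real.pi/4)
    rwa [Real.cos_pi_div_four] at h
  have hfac : 1 ≤ Real.sin (θ₁/2) + 2*Real.cos (θ₁/2) := by
    have h1 : (1:ℝ) ≤ Real.sqrt 2 := by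
      rw [show (1:ℝ) = Real.sqrt 1 by simp]
      exact Real.sqrt_le_sqrt (by norm_num)
    linarith [hsinpos.le, hcoshalf]
  have hST : (S+T) * Real.sin (θ₁/2) ≤ ‖α₁ - p‖ := by
    have hsq : ((S+T) * Real.sin (θ₁/2))^2 ≤ ‖α₁ - p‖^2 := by
      rw [mul_pow, hsin2, hm2, hcinner]
      have hprod : (0:ℝ) ≤ (1 + Real.cos θ₁) * (S-T)^2 :=
        mul_nonneg (by linarith [Real.neg_one_le_cos θ₁]) (sq_nonneg (S-T))
      linarith [hprod]
    exact le_of_pow_le_pow_left₀ two_ne_zero (norm_nonneg _) hsq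
  -- conclusion
  rw [Real.tan_pi_div_two_sub, Real.tan_eq_sin_div_cos, inv_div]
  have hrhs : ‖α₁-p‖ * (1 + 2*(Real.cos (θ₁/2)/Real.sin (θ₁/2))) =
      ‖α₁-p‖*(Real.sin (θ₁/2) + 2*Real.cos (θ₁/2))/Real.sin (θ₁/2) := by
    field_simp
  rw [hrhs, le_div_iff₀ hsinpos]
  calc (∑ i : Fin n, ‖v i.succ - v i.castSucc‖) * Real.sin (θ₁/2)
      ≤ (S+T) * Real.sin (θ₁/2) := mul_le_mul_of_nonneg_right hlen hsinpos.le
    _ ≤ ‖α₁ - p‖ := hST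
    _ = ‖α₁ - p‖ * 1 := (mul_one _).symm
    _ ≤ ‖α₁-p‖ * (Real.sin (θ₁/2) + 2*Real.cos (θ₁/2)) :=
        mul_le_mul_of_nonneg_left hfac (norm_nonneg _)
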